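/- The weakly continuous multi-valued functions are closed under composition: for all multi-valued functions f, g on Baire space, if f ≤_W \widehat{LLPO} and g ≤_W \widehat{LLPO}, then g ∘ f ≤_W \widehat{LLPO}, where ∘ denotes composition of multi-valued functions. -/
import Mathlib


/-- Baire space `ℕ^ℕ` with the product topology (`ℕ` discrete). -/
abbrev Baire : Type := ℕ → ℕ

/-- The pairing `⟨p,q⟩` on Baire space: `⟨p,q⟩(2n) = p(n)`, `⟨p,q⟩(2n+1) = q(n)`. -/
def bpair (p q : Baire) : Baire := fun n => if n % 2 = 0 then p (n / 2) else q (n / 2)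

/-- First projection `π₁`. -/
def proj1 (r : Baire) : Baire := fun n => r (2 * n)

/-- Second projection `π₂`. -/
def proj2 (r : Baire) : Baire := fun n => r (2 * n + 1)

/-- Multi-valued functions on Baire space. -/
abbrev MV : Type := Baire → Set Baire

/-- The domain of a multi-valued function. -/
def dom (f : MV) : Set Baire := {p | (f p).Nonempty}

/-- `F` is a realizer of `f`: `F p ∈ f p` for all `p` in the domain of `f`. -/
def Realizes (F : Baire → Baire) (f : MV) : Prop := ∀ p, (f p).Nonempty → F p ∈ f p

/-- Continuous Weihrauch reducibility `f ≤_W g`. -/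
def WRed (f g : MV) : Prop :=
  ∃ H K : Baire → Baire, Continuous H ∧ Continuous K ∧
    ∀ G : Baire → Baire, Realizes G g → Realizes (fun p => H (bpair p (G (K p)))) f

/-- Strong continuous Weihrauch reducibility `f ≤_sW g`. -/
def SWRed (f g : MV) : Prop :=
  ∃ H K : Baire → Baire, Continuous H ∧ Continuous K ∧
    ∀ G : Baire → Baire, Realizes G g → Realizes (fun p => H (G (K p))) f

/-- Continuous Weihrauch equivalence. -/
def WEquiv (f g : MV) : Prop := WRed f g ∧ WRed g f

/-- Strong continuous Weihrauch equivalence. -/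
def SWEquiv (f g : MV) : Prop := SWRed f g ∧ SWRed g f

/-- Composition of multi-valued functions: `(g ∘ f)(x) = {z | ∃ y ∈ f(x), z ∈ g(y)}`
if `x ∈ dom(f)` and `f(x) ⊆ dom(g)`, and `∅` otherwise. -/
def mComp (g f : MV) : MV := fun x =>
  {z | (f x).Nonempty ∧ (∀ y ∈ f x, (g y).Nonempty) ∧ ∃ y ∈ f x, z ∈ g y}

/-- The parallelized lesser limited principle of omniscience. -/
def parLLPO : MV := fun p =>
  {q | ∀ k, (q k = 0 ∧ ∀ n, p (Nat.pair k (2 * n)) = 0) ∨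
            (q k = 1 ∧ ∀ n, p (Nat.pair k (2 * n + 1)) = 0)}

open Classical in
/-- Auxiliary: basic facts -/
theorem WC.proj1_bpair (p q : Baire) : proj1 (bpair p q) = p := by
  funext n; simp [proj1, bpair, Nat.mul_div_cancel_left]

theorem WC.proj2_bpair (p q : Baire) : proj2 (bpair p q) = q := by
  funext n
  have h1 : (2 * n + 1) % 2 = 1 := by omega
  have h2 : (2 * n + 1) / 2 = n := by omega
  simp [proj2, bpair, h1, h2]

theorem WC.cont_eval : Continuous (fun x : Baire × ℕ => x.1 x.2) := by
  rw [continuous_def]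
  intro s _
  have : (fun x : Baire × ℕ => x.1 x.2) ⁻¹' s = ⋃ n : ℕ, ((fun c : Baire => c n) ⁻¹' s) ×ˢ ({n} : Set ℕ) := by
    ext ⟨c, n⟩
    simp only [Set.mem_iUnion, Set.mem_preimage, Set.mem_prod, Set.mem_singleton_iff]
    exact ⟨fun h => ⟨n, h, rfl⟩, fun ⟨i, h, hi⟩ => hi ▸ h⟩
  rw [this]
  exact isOpen_iUnion fun n => ((isOpen_discrete _).preimage (continuous_apply n)).prod (isOpen_discrete _)

theorem WC.cont_bpair2 : Continuous (fun x : Baire × Baire => bpair x.1 x.2) := by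
  apply continuous_pi
  intro n
  unfold bpair
  by_cases h : n % 2 = 0
  · simp only [h, if_true]; exact (continuous_apply (n / 2)).comp continuous_fst
  · simp only [h, if_false]; exact (continuous_apply (n / 2)).comp continuous_snd

theorem WC.cont_proj1 : Continuous proj1 :=
  continuous_pi fun n => continuous_apply (2 * n)

theorem WC.cont_proj2 : Continuous proj2 :=
  continuous_pi fun n => continuous_apply (2 * n + 1)

open Classical in
theorem WC.parLLPO_nonempty_iff (q : Baire) :
    (parLLPO q).Nonempty ↔ ∀ k, (∀ n, q (Nat.pair k (2 * n)) = 0) ∨ (∀ n, q (Nat.pair k (2 * n + 1)) = 0) := by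
  constructor
  · rintro ⟨r, hr⟩ k
    rcases hr k with ⟨_, h⟩ | ⟨_, h⟩
    · exact Or.inl h
    · exact Or.inr h
  · intro h
    refine ⟨fun k => if ∀ n, q (Nat.pair k (2 * n)) = 0 then 0 else 1, fun k => ?_⟩
    by_cases hk : ∀ n, q (Nat.pair k (2 * n)) = 0
    · exact Or.inl ⟨by simp [hk], hk⟩
    · exact Or.inr ⟨by simp [hk], (h k).resolve_left hk⟩

open Classical in
/-- If `f ≤_W parLLPO` via `(H, K)`, then for `p ∈ dom f` and any acceptable answer `a`,
`H ⟨p, a⟩ ∈ f p`. -/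
theorem WC.lemA (f : MV) (H K : Baire → Baire)
    (hR : ∀ G : Baire → Baire, Realizes G parLLPO → Realizes (fun p => H (bpair p (G (K p)))) f)
    (p a : Baire) (hp : (f p).Nonempty)
    (ha : a ∈ parLLPO (K p) ∨ ¬(parLLPO (K p)).Nonempty) :
    H (bpair p a) ∈ f p := by
  classical
  set G0 : Baire → Baire := fun q => if h : (parLLPO q).Nonempty then h.some else (fun _ => 0) with hG0
  set G : Baire → Baire := Function.update G0 (K p) a with hG
  have hGr : Realizes G parLLPO := by
    intro q hq
    rw [hG, Function.update_apply]
    by_cases hqe : q = K p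
    · subst hqe
      simp only [if_pos rfl]
      rcases ha with h | h
      · exact h
      · exact absurd hq h
    · simp only [if_neg hqe, hG0, dif_pos hq]
      exact hq.some_mem
  have := hR G hGr p hp
  simpa [hG, Function.update_self] using this
namespace WC
noncomputable section
open Classical

/-- `s`-bit (first-component bit) of a node. -/
def sbit (w : List Bool) (k : ℕ) : ℕ := (w.getD (2 * k) false).toNat

/-- `u`-bit (second-component bit) of a node. -/
def ubit (w : List Bool) (j : ℕ) : ℕ := (w.getD (2 * j + 1) false).toNat

/-- The compact set of binary sequences compatible with the `s`-part of a node. -/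
def ExtS (w : List Bool) : Set Baire :=
  Set.pi Set.univ (fun k => if 2 * k < w.length then {sbit w k} else {0, 1})

variable (A : Baire → Baire) (W : Baire → Baire → ℕ → ℕ)

/-- Forcing: all binary sequences compatible with the `s`-part of `w` give a nonzero value. -/
def FB (p : Baire) (w : List Bool) (t : ℕ) : Prop := ∀ a ∈ ExtS w, W p a t ≠ 0

/-- First pruning condition (for the first parLLPO instance `A p`). -/
def ok1 (p : Baire) (w : List Bool) : Prop :=
  ¬ ∃ k n, 2 * k < w.length ∧ n < w.length ∧
      A p (Nat.pair k (2 * n + sbit w k)) ≠ 0 ∧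
      ∀ n' < w.length, A p (Nat.pair k (2 * n' + (1 - sbit w k))) = 0

/-- Second pruning condition (for the second parLLPO instance). -/
def ok2 (p : Baire) (w : List Bool) : Prop :=
  ¬ ∃ j m, 2 * j + 1 < w.length ∧ m < w.length ∧
      FB W p w (Nat.pair j (2 * m + ubit w j)) ∧
      ∀ m' < w.length, ¬ FB W p w (Nat.pair j (2 * m' + (1 - ubit w j)))

/-- Membership in the tree. -/
def memT (p : Baire) (w : List Bool) : Prop :=
  ∀ n ≤ w.length, ok1 A p (w.take n) ∧ ok2 W p (w.take n)

/-- `w` has an extension in the tree, `m` levels further down. -/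
def alive (p : Baire) : ℕ → List Bool → Prop
  | 0, w => memT A W p w
  | (m+1), w => alive p m (w ++ [false]) ∨ alive p m (w ++ [true])

/-- Entry of the death-race column. -/
def eD (p : Baire) (w : List Bool) (b : Bool) (m : ℕ) : ℕ :=
  if alive A W p m (w ++ [b]) then 0 else if alive A W p m (w ++ [!b]) then 1 else 0

/-- The constructed parLLPO instance. -/
def Kc (p : Baire) : Baire := fun n =>
  match (Encodable.decode n.unpair.1 : Option (List Bool)) with
  | none => 0
  | some w => if n.unpair.2 % 2 = 0 then eD A W p w false (n.unpair.2 / 2)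
              else eD A W p w true (n.unpair.2 / 2)

/-- Extraction of a branch from an answer `c`. -/
def X (c : Baire) : ℕ → List Bool
  | 0 => []
  | (n+1) => X c n ++ [decide (c (Encodable.encode (X c n)) = 1)]

def xb (c : Baire) (i : ℕ) : Bool := decide (c (Encodable.encode (X c i)) = 1)

def a1 (c : Baire) : Baire := fun k => (xb c (2 * k)).toNat

def a2 (c : Baire) : Baire := fun j => (xb c (2 * j + 1)).toNat

/-- Good branch: even bits. -/
def ga (p : Baire) (k : ℕ) : Bool :=
  if (∀ d, (∃ n < d, A p (Nat.pair k (2 * n + 1)) ≠ 0) → (∃ n < d, A p (Nat.pair k (2 * n)) ≠ 0))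
  then true else false

/-- Forcing along the good branch's first component. -/
def FBg (p : Baire) (ℓ t : ℕ) : Prop :=
  ∀ a : Baire, (∀ i, a i ≤ 1) → (∀ k < ℓ, a k = (ga A p k).toNat) → W p a t ≠ 0

/-- Good branch: odd bits. -/
def god (p : Baire) (j : ℕ) : Bool :=
  if (∀ d, (∃ m < d, FBg A W p ((d+1)/2) (Nat.pair j (2 * m + 1))) →
        (∃ m < d, FBg A W p ((d+1)/2) (Nat.pair j (2 * m))))
  then true else false

def gb (p : Baire) (i : ℕ) : Bool := if i % 2 = 0 then ga A p (i / 2) else god A W p (i / 2)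

def gnode (p : Baire) (d : ℕ) : List Bool := (List.range d).map (gb A W p)

end
end WC
namespace WC
open Classical

theorem getD_map_range (f : ℕ → Bool) {i d : ℕ} (h : i < d) :
    ((List.range d).map f).getD i false = f i := by
  rw [List.getD_eq_getElem _ _ (by simpa using h)]
  simp

theorem mem_ExtS {a : Baire} {w : List Bool} :
    a ∈ ExtS w ↔ ∀ k, if 2 * k < w.length then a k = sbit w k else a k ≤ 1 := by
  unfold ExtS
  rw [Set.mem_univ_pi]
  apply forall_congr'
  intro k
  split_ifs
  · simp [Set.mem_singleton_iff]
  · simp only [Set.mem_insert_iff, Set.mem_singleton_iff]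
    omega

section TreeMath
variable {A : Baire → Baire} {W : Baire → Baire → ℕ → ℕ} {p : Baire}

theorem X_succ (c : Baire) (n : ℕ) : X c (n + 1) = X c n ++ [xb c n] := rfl

theorem length_X (c : Baire) : ∀ n, (X c n).length = n
  | 0 => rfl
  | (n + 1) => by rw [X_succ]; simp [length_X c n]

theorem getD_X (c : Baire) {i n : ℕ} (h : i < n) : (X c n).getD i false = xb c i := by
  induction n with
  | zero => omega
  | succ n ih =>
    rcases Nat.lt_or_ge i n with h' | h'
    · rw [X_succ, List.getD_append _ _ _ _ (by rw [length_X]; exact h')]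
      exact ih h'
    · have hin : i = n := by omega
      subst hin
      rw [X_succ]
      have hlen : (X c i).length = i := length_X c i
      rw [List.getD_append_right _ _ _ _ (by omega)]
      simp [hlen]

theorem sbit_X (c : Baire) {k n : ℕ} (h : 2 * k < n) : sbit (X c n) k = a1 c k := by
  rw [sbit, getD_X c h]; rfl

theorem ubit_X (c : Baire) {j n : ℕ} (h : 2 * j + 1 < n) : ubit (X c n) j = a2 c j := by
  rw [ubit, getD_X c h]; rfl

theorem memT_prefix {w : List Bool} {b : Bool} (h : memT A W p (w ++ [b])) : memT A W p w := by
  intro n hn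
  have := h n (by simp; omega)
  rwa [List.take_append_of_le_length hn] at this

theorem alive_mono_succ : ∀ {m : ℕ} {w : List Bool}, alive A W p (m + 1) w → alive A W p m w := by
  intro m
  induction m with
  | zero =>
    intro w h
    rcases h with h | h
    · exact memT_prefix h
    · exact memT_prefix h
  | succ m ih =>
    intro w h
    rcases h with h | h
    · exact Or.inl (ih h)
    · exact Or.inr (ih h)

theorem alive_mono {m m' : ℕ} {w : List Bool} (h : m ≤ m') (ha : alive A W p m' w) :
    alive A W p m w := by
  induction m' with
  | zero => exact (Nat.le_zero.mp h) ▸ ha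
  | succ m' ih =>
    rcases Nat.lt_or_ge m (m' + 1) with h' | h'
    · exact ih (by omega) (alive_mono_succ ha)
    · have : m = m' + 1 := by omega
      exact this ▸ ha

theorem choice_rule (P : ℕ → ℕ → Prop)
    (mono : ∀ b d d', d ≤ d' → P b d → P b d')
    (c : Prop) [Decidable c] (hc : c ↔ ∀ d, P 1 d → P 0 d) :
    ∀ d, ¬ (P (if c then 1 else 0) d ∧ ¬ P (1 - (if c then 1 else 0)) d) := by
  by_cases h : c
  · simp only [if_pos h]
    rintro d ⟨h1, h0⟩
    exact h0 ((hc.mp h) d h1)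
  · simp only [if_neg h]
    rw [hc] at h
    push_neg at h
    obtain ⟨dh, h1, h0⟩ := h
    rintro d ⟨hP0, hnP1⟩
    rcases le_total d dh with hle | hle
    · exact h0 (mono 0 d dh hle hP0)
    · exact hnP1 (mono 1 dh d hle h1)

end TreeMath
end WC
namespace WC
open Classical

section GoodBranch
variable {A : Baire → Baire} {W : Baire → Baire → ℕ → ℕ} {p : Baire}

theorem length_gnode (d : ℕ) : (gnode A W p d).length = d := by simp [gnode]

theorem gnode_take {n d : ℕ} (h : n ≤ d) : (gnode A W p d).take n = gnode A W p n := by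
  rw [gnode, gnode, ← List.map_take, List.take_range, Nat.min_eq_left h]

theorem getD_gnode {i d : ℕ} (h : i < d) : (gnode A W p d).getD i false = gb A W p i :=
  getD_map_range _ h

theorem sbit_gnode {k d : ℕ} (h : 2 * k < d) : sbit (gnode A W p d) k = (ga A p k).toNat := by
  rw [sbit, getD_gnode h, gb]
  simp [Nat.mul_mod_right, Nat.mul_div_cancel_left]

theorem ubit_gnode {j d : ℕ} (h : 2 * j + 1 < d) :
    ubit (gnode A W p d) j = (god A W p j).toNat := by
  rw [ubit, getD_gnode h, gb]
  have h1 : (2 * j + 1) % 2 = 1 := by omega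
  have h2 : (2 * j + 1) / 2 = j := by omega
  simp [h1, h2]

theorem FBg_mono {ℓ ℓ' t : ℕ} (h : ℓ ≤ ℓ') (hf : FBg A W p ℓ t) : FBg A W p ℓ' t :=
  fun a hb hcon => hf a hb (fun k hk => hcon k (lt_of_lt_of_le hk h))

theorem FB_gnode {d t : ℕ} : FB W p (gnode A W p d) t ↔ FBg A W p ((d + 1) / 2) t := by
  constructor
  · intro h a hb hcon
    refine h a (mem_ExtS.mpr fun k => ?_)
    rw [length_gnode]
    split_ifs with h2k
    · rw [sbit_gnode h2k]
      exact hcon k (by omega)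
    · exact hb k
  · intro h a ha
    have ha' := mem_ExtS.mp ha
    refine h a (fun i => ?_) (fun k hk => ?_)
    · have := ha' i
      rw [length_gnode] at this
      split_ifs at this with h2i
      · rw [this, sbit_gnode h2i]
        cases ga A p i <;> simp
      · exact this
    · have := ha' k
      rw [length_gnode] at this
      rw [if_pos (by omega : 2 * k < d)] at this
      rw [this, sbit_gnode (by omega : 2 * k < d)]

theorem gok1 (n : ℕ) : ok1 A p (gnode A W p n) := by
  rintro ⟨k, n', h2k, hn', hne, hguard⟩
  rw [length_gnode] at h2k hn' hguard
  rw [sbit_gnode h2k] at hne hguard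
  by_cases hcond : ∀ d, (∃ i < d, A p (Nat.pair k (2 * i + 1)) ≠ 0) →
      ∃ i < d, A p (Nat.pair k (2 * i)) ≠ 0
  · have hb : (ga A p k).toNat = 1 := by rw [ga, if_pos hcond]; rfl
    rw [hb] at hne hguard
    obtain ⟨n₀, hn₀, hv₀⟩ := hcond n ⟨n', hn', hne⟩
    exact hv₀ (by simpa using hguard n₀ hn₀)
  · have hb : (ga A p k).toNat = 0 := by rw [ga, if_neg hcond]; rfl
    rw [hb] at hne hguard
    push_neg at hcond
    obtain ⟨dh, ⟨n₁, hn₁, hv₁⟩, h0⟩ := hcond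
    rcases le_total n dh with hle | hle
    · exact hne (by simpa using h0 n' (by omega))
    · exact hv₁ (hguard n₁ (by omega))

theorem gok2 (n : ℕ) : ok2 W p (gnode A W p n) := by
  rintro ⟨j, m, h2j, hm, hFB, hguard⟩
  rw [length_gnode] at h2j hm hguard
  rw [ubit_gnode h2j] at hFB hguard
  by_cases hcond : ∀ d, (∃ i < d, FBg A W p ((d + 1) / 2) (Nat.pair j (2 * i + 1))) →
      ∃ i < d, FBg A W p ((d + 1) / 2) (Nat.pair j (2 * i))
  · have hb : (god A W p j).toNat = 1 := by rw [god, if_pos hcond]; rfl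
    rw [hb] at hFB hguard
    rw [FB_gnode] at hFB
    obtain ⟨m₀, hm₀, hv₀⟩ := hcond n ⟨m, hm, hFB⟩
    refine hguard m₀ hm₀ ?_
    rw [show 2 * m₀ + (1 - 1) = 2 * m₀ by omega, FB_gnode]
    exact hv₀
  · have hb : (god A W p j).toNat = 0 := by rw [god, if_neg hcond]; rfl
    rw [hb] at hFB hguard
    rw [FB_gnode] at hFB
    push_neg at hcond
    obtain ⟨dh, ⟨m₁, hm₁, hv₁⟩, h0⟩ := hcond
    rcases le_total n dh with hle | hle
    · refine h0 m (by omega) ?_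
      have := FBg_mono (Nat.div_le_div_right (by omega : n + 1 ≤ dh + 1)) hFB
      simpa using this
    · refine hguard m₁ (by omega) ?_
      rw [show 2 * m₁ + (1 - 0) = 2 * m₁ + 1 by omega, FB_gnode]
      exact FBg_mono (Nat.div_le_div_right (by omega : dh + 1 ≤ n + 1)) hv₁

theorem memT_gnode (d : ℕ) : memT A W p (gnode A W p d) := by
  intro n hn
  rw [length_gnode] at hn
  rw [gnode_take hn]
  exact ⟨gok1 n, gok2 n⟩

theorem gnode_succ (d : ℕ) : gnode A W p (d + 1) = gnode A W p d ++ [gb A W p d] := by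
  rw [gnode, gnode, List.range_succ, List.map_append]
  rfl

theorem alive_gnode : ∀ (m d : ℕ), alive A W p m (gnode A W p d) := by
  intro m
  induction m with
  | zero => exact fun d => memT_gnode d
  | succ m ih =>
    intro d
    show alive A W p m _ ∨ alive A W p m _
    cases hgb : gb A W p d with
    | false => exact Or.inl (by rw [← hgb, ← gnode_succ]; exact ih (d + 1))
    | true => exact Or.inr (by rw [← hgb, ← gnode_succ]; exact ih (d + 1))

theorem alive_nil (m : ℕ) : alive A W p m ([] : List Bool) := by
  have := alive_gnode (A := A) (W := W) (p := p) m 0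
  simpa [gnode] using this

end GoodBranch
end WC
namespace WC
open Classical

section Extraction
variable {A : Baire → Baire} {W : Baire → Baire → ℕ → ℕ} {p : Baire} {c : Baire}

theorem eD_ne {w : List Bool} {b : Bool} {m : ℕ} (h : eD A W p w b m ≠ 0) :
    ¬ alive A W p m (w ++ [b]) ∧ alive A W p m (w ++ [!b]) := by
  unfold eD at h
  by_cases h1 : alive A W p m (w ++ [b])
  · rw [if_pos h1] at h; exact absurd rfl h
  · rw [if_neg h1] at h
    by_cases h2 : alive A W p m (w ++ [!b])
    · exact ⟨h1, h2⟩
    · rw [if_neg h2] at h; exact absurd rfl h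

theorem eD_zero {w : List Bool} {b : Bool} {m : ℕ} (h : eD A W p w b m = 0)
    (ha : alive A W p m (w ++ [!b])) : alive A W p m (w ++ [b]) := by
  unfold eD at h
  by_cases h1 : alive A W p m (w ++ [b])
  · exact h1
  · rw [if_neg h1, if_pos ha] at h
    exact absurd h one_ne_zero

theorem Kc_even (w : List Bool) (m : ℕ) :
    Kc A W p (Nat.pair (Encodable.encode w) (2 * m)) = eD A W p w false m := by
  have h1 : (2 * m) % 2 = 0 := by omega
  have h2 : (2 * m) / 2 = m := by omega
  simp [Kc, Nat.unpair_pair, Encodable.encodek, h1, h2]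

theorem Kc_odd (w : List Bool) (m : ℕ) :
    Kc A W p (Nat.pair (Encodable.encode w) (2 * m + 1)) = eD A W p w true m := by
  have h1 : (2 * m + 1) % 2 = 1 := by omega
  have h2 : (2 * m + 1) / 2 = m := by omega
  simp [Kc, Nat.unpair_pair, Encodable.encodek, h1, h2]

theorem Kc_dom : (parLLPO (Kc A W p)).Nonempty := by
  rw [parLLPO_nonempty_iff]
  intro k
  rcases hdec : (Encodable.decode k : Option (List Bool)) with _ | w
  · left
    intro n
    simp [Kc, Nat.unpair_pair, hdec]
  · have hcol0 : ∀ n, Kc A W p (Nat.pair k (2 * n)) = eD A W p w false n := by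
      intro n
      have h1 : (2 * n) % 2 = 0 := by omega
      have h2 : (2 * n) / 2 = n := by omega
      simp [Kc, Nat.unpair_pair, hdec, h1, h2]
    have hcol1 : ∀ n, Kc A W p (Nat.pair k (2 * n + 1)) = eD A W p w true n := by
      intro n
      have h1 : (2 * n + 1) % 2 = 1 := by omega
      have h2 : (2 * n + 1) / 2 = n := by omega
      simp [Kc, Nat.unpair_pair, hdec, h1, h2]
    by_contra hcon
    push_neg at hcon
    obtain ⟨⟨n₀, h₀⟩, ⟨n₁, h₁⟩⟩ := hcon
    rw [hcol0 n₀] at h₀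
    rw [hcol1 n₁] at h₁
    obtain ⟨hd₀, ha₀⟩ := eD_ne h₀
    obtain ⟨hd₁, ha₁⟩ := eD_ne h₁
    simp only [Bool.not_false, Bool.not_true] at ha₀ ha₁
    rcases le_total n₀ n₁ with hle | hle
    · exact hd₀ (alive_mono hle ha₁)
    · exact hd₁ (alive_mono hle ha₀)

theorem alive_X (hc : c ∈ parLLPO (Kc A W p)) : ∀ n m, alive A W p m (X c n) := by
  intro n
  induction n with
  | zero => exact fun m => alive_nil m
  | succ n ih =>
    intro m
    rw [X_succ]
    rcases hc (Encodable.encode (X c n)) with ⟨hck, hcol⟩ | ⟨hck, hcol⟩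
    · have hbit : xb c n = false := by simp [xb, hck]
      rw [hbit]
      have := ih (m + 1)
      rcases this with h | h
      · exact h
      · have hz : eD A W p (X c n) false m = 0 := by
          rw [← Kc_even]; exact hcol m
        exact eD_zero hz (by simpa using h)
    · have hbit : xb c n = true := by simp [xb, hck]
      rw [hbit]
      have := ih (m + 1)
      rcases this with h | h
      · have hz : eD A W p (X c n) true m = 0 := by
          rw [← Kc_odd]; exact hcol m
        exact eD_zero hz (by simpa using h)
      · exact h

theorem ok_X (hc : c ∈ parLLPO (Kc A W p)) (n : ℕ) :
    ok1 A p (X c n) ∧ ok2 W p (X c n) := by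
  have hm : memT A W p (X c n) := alive_X hc n 0
  have := hm (X c n).length le_rfl
  rwa [List.take_length] at this

theorem a1_le_one (c : Baire) (k : ℕ) : a1 c k ≤ 1 := by
  unfold a1; cases xb c (2 * k) <;> simp

theorem valid1 (hc : c ∈ parLLPO (Kc A W p)) (hne : (parLLPO (A p)).Nonempty) :
    a1 c ∈ parLLPO (A p) := by
  intro k
  have key : ∀ n, A p (Nat.pair k (2 * n + (xb c (2 * k)).toNat)) = 0 := by
    by_contra h
    push_neg at h
    obtain ⟨n, hn⟩ := h
    set D := max (2 * k + 1) (n + 1) with hD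
    have hok := (ok_X hc D).1
    have hsb : sbit (X c D) k = (xb c (2 * k)).toNat := by
      rw [sbit, getD_X c (by omega : 2 * k < D)]
    have hg : ¬ ∀ n' < (X c D).length,
        A p (Nat.pair k (2 * n' + (1 - sbit (X c D) k))) = 0 := by
      intro hguard
      exact hok ⟨k, n, by rw [length_X]; omega, by rw [length_X]; omega,
        by rw [hsb]; exact hn, hguard⟩
    push_neg at hg
    obtain ⟨n', hn', hne'⟩ := hg
    rw [hsb] at hne'
    rcases (parLLPO_nonempty_iff _).mp hne k with hcol | hcol
    · cases hb : xb c (2 * k) with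
      | false => rw [hb] at hn; exact hn (by simpa using hcol n)
      | true => rw [hb] at hne'; exact hne' (by simpa using hcol n')
    · cases hb : xb c (2 * k) with
      | false => rw [hb] at hne'; exact hne' (by simpa using hcol n')
      | true => rw [hb] at hn; exact hn (by simpa using hcol n)
  cases hb : xb c (2 * k) with
  | false =>
    left
    refine ⟨by simp [a1, hb], fun n => ?_⟩
    have := key n
    rw [hb] at this
    simpa using this
  | true =>
    right
    refine ⟨by simp [a1, hb], fun n => ?_⟩
    have := key n
    rw [hb] at this
    simpa using this

theorem cylinder {φ : Baire → ℕ} (hφ : Continuous φ) (a : Baire) :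
    ∃ N, ∀ a', (∀ i < N, a' i = a i) → φ a' = φ a := by
  have hop : IsOpen (φ ⁻¹' {φ a}) := (isOpen_discrete _).preimage hφ
  rcases (isOpen_pi_iff.mp hop) a rfl with ⟨I, u, hIu, hsub⟩
  refine ⟨(I.sup id) + 1, fun a' ha' => ?_⟩
  have hmem : a' ∈ Set.pi (↑I : Set ℕ) u := by
    intro i hi
    rw [ha' i (by have := Finset.le_sup (f := id) hi; simpa using Nat.lt_succ_of_le this)]
    exact (hIu i hi).2
  exact Set.mem_singleton_iff.mp (hsub hmem)

theorem valid2 (hWa : ∀ (t : ℕ), Continuous fun a => W p a t)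
    (hc : c ∈ parLLPO (Kc A W p))
    (hne : (parLLPO (fun t => W p (a1 c) t)).Nonempty) :
    a2 c ∈ parLLPO (fun t => W p (a1 c) t) := by
  intro j
  have key : ∀ m, W p (a1 c) (Nat.pair j (2 * m + (xb c (2 * j + 1)).toNat)) = 0 := by
    by_contra h
    push_neg at h
    obtain ⟨m, hm⟩ := h
    obtain ⟨N, hN⟩ := cylinder (hWa (Nat.pair j (2 * m + (xb c (2 * j + 1)).toNat))) (a1 c)
    set D := max (max (2 * j + 2) (m + 1)) (2 * N + 2) with hD
    have ha1mem : a1 c ∈ ExtS (X c D) := by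
      rw [mem_ExtS]
      intro i
      split_ifs with h2i
      · rw [length_X] at h2i
        exact (sbit_X c h2i).symm
      · exact a1_le_one c i
    have hub : ubit (X c D) j = (xb c (2 * j + 1)).toNat := by
      rw [ubit, getD_X c (by omega : 2 * j + 1 < D)]
    have hFB : FB W p (X c D) (Nat.pair j (2 * m + (xb c (2 * j + 1)).toNat)) := by
      intro a ha
      have hagree : ∀ i < N, a i = a1 c i := by
        intro i hi
        have := mem_ExtS.mp ha i
        rw [length_X, if_pos (by omega : 2 * i < D)] at this
        rw [this, sbit_X c (by omega : 2 * i < D)]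
      rw [hN a hagree]
      exact hm
    have hok := (ok_X hc D).2
    have hg : ¬ ∀ m' < (X c D).length,
        ¬ FB W p (X c D) (Nat.pair j (2 * m' + (1 - ubit (X c D) j))) := by
      intro hguard
      exact hok ⟨j, m, by rw [length_X]; omega, by rw [length_X]; omega,
        by rw [hub]; exact hFB, hguard⟩
    push_neg at hg
    obtain ⟨m', hm', hFB'⟩ := hg
    rw [hub] at hFB'
    have hval' := hFB' (a1 c) ha1mem
    rcases (parLLPO_nonempty_iff _).mp hne j with hcol | hcol
    · cases hb : xb c (2 * j + 1) with
      | false => rw [hb] at hm; exact hm (by simpa using hcol m)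
      | true => rw [hb] at hval'; exact hval' (by simpa using hcol m')
    · cases hb : xb c (2 * j + 1) with
      | false => rw [hb] at hval'; exact hval' (by simpa using hcol m')
      | true => rw [hb] at hm; exact hm (by simpa using hcol m)
  cases hb : xb c (2 * j + 1) with
  | false =>
    left
    refine ⟨by simp [a2, hb], fun m => ?_⟩
    have := key m
    rw [hb] at this
    simpa using this
  | true =>
    right
    refine ⟨by simp [a2, hb], fun m => ?_⟩
    have := key m
    rw [hb] at this
    simpa using this

end Extraction
end WC
namespace WC
open Classical

section Clopen

theorem isClopen_bex {d : ℕ} {Q : ℕ → Baire → Prop} (h : ∀ n, IsClopen {p | Q n p}) :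
    IsClopen {p | ∃ n < d, Q n p} := by
  induction d with
  | zero =>
    have : {p : Baire | ∃ n < 0, Q n p} = ∅ := by ext p; simp
    rw [this]; exact isClopen_empty
  | succ d ih =>
    have : {p : Baire | ∃ n < d + 1, Q n p} = {p | ∃ n < d, Q n p} ∪ {p | Q d p} := by
      ext p
      simp only [Set.mem_union, Set.mem_setOf_eq]
      constructor
      · rintro ⟨n, hn, hq⟩
        rcases Nat.lt_or_ge n d with h' | h'
        · exact Or.inl ⟨n, h', hq⟩
        · have hnd : n = d := by omega
          exact Or.inr (hnd ▸ hq)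
      · rintro (⟨n, hn, hq⟩ | hq)
        · exact ⟨n, by omega, hq⟩
        · exact ⟨d, by omega, hq⟩
    rw [this]
    exact ih.union (h d)

theorem isClopen_ball {d : ℕ} {Q : ℕ → Baire → Prop} (h : ∀ n, IsClopen {p | Q n p}) :
    IsClopen {p | ∀ n < d, Q n p} := by
  have : {p : Baire | ∀ n < d, Q n p} = {p | ∃ n < d, ¬ Q n p}ᶜ := by
    ext p; simp
  rw [this]
  exact (isClopen_bex (fun n => (h n).compl)).compl

theorem isClopen_and_const {c : Prop} {S : Set Baire} (hS : IsClopen S) :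
    IsClopen {p | c ∧ p ∈ S} := by
  by_cases hc : c
  · have : {p | c ∧ p ∈ S} = S := by ext p; simp [hc]
    rwa [this]
  · have : {p : Baire | c ∧ p ∈ S} = ∅ := by ext p; simp [hc]
    rw [this]; exact isClopen_empty

variable {A : Baire → Baire} {W : Baire → Baire → ℕ → ℕ}

theorem isCompact_ExtS (w : List Bool) : IsCompact (ExtS w) := by
  apply isCompact_univ_pi
  intro k
  split_ifs
  · exact (Set.finite_singleton _).isCompact
  · exact (Set.toFinite ({0, 1} : Set ℕ)).isCompact

theorem isClopen_FB (hW2 : ∀ t, Continuous fun x : Baire × Baire => W x.1 x.2 t)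
    (w : List Bool) (t : ℕ) : IsClopen {p | FB W p w t} := by
  constructor
  · -- closed: complement open
    rw [← isOpen_compl_iff]
    rw [isOpen_iff_forall_mem_open]
    intro p hp
    simp only [Set.mem_compl_iff, Set.mem_setOf_eq, FB] at hp
    push_neg at hp
    obtain ⟨a, ha, hval⟩ := hp
    refine ⟨(fun p' => W p' a t) ⁻¹' {0}, ?_, ?_, hval⟩
    · intro p' hp'
      simp only [Set.mem_compl_iff, Set.mem_setOf_eq, FB]
      push_neg
      exact ⟨a, ha, hp'⟩
    · exact (isOpen_discrete _).preimage
        ((hW2 t).comp (continuous_id.prodMk continuous_const))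
  · rw [isOpen_iff_forall_mem_open]
    intro p hp
    have hopen : IsOpen {x : Baire × Baire | W x.1 x.2 t ≠ 0} := by
      have : {x : Baire × Baire | W x.1 x.2 t ≠ 0} = ((fun x : Baire × Baire => W x.1 x.2 t) ⁻¹' {0})ᶜ := by
        ext x; simp
      rw [this]
      exact ((isClopen_discrete ({0} : Set ℕ)).preimage (hW2 t)).compl.isOpen
    have hsub : ({p} : Set Baire) ×ˢ ExtS w ⊆ {x : Baire × Baire | W x.1 x.2 t ≠ 0} := by
      rintro ⟨p', a⟩ ⟨hp', ha⟩
      simp only [Set.mem_singleton_iff] at hp'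
      subst hp'
      exact hp a ha
    obtain ⟨u, v, hu, hv, hpu, hav, huv⟩ :=
      generalized_tube_lemma isCompact_singleton (isCompact_ExtS w) hopen hsub
    refine ⟨u, fun p' hp' a ha => huv (Set.mk_mem_prod hp' (hav ha)), hu, hpu rfl⟩

theorem isClopen_ok1 (hA : Continuous A) (w : List Bool) : IsClopen {p | ok1 A p w} := by
  have hval : ∀ (i c : ℕ), IsClopen {p | A p i = c} := fun i c =>
    (isClopen_discrete {c}).preimage ((continuous_apply i).comp hA)
  have hne : ∀ (i : ℕ), IsClopen {p | A p i ≠ 0} := fun i => (hval i 0).compl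
  have key : ∀ k n, IsClopen {p | 2 * k < w.length ∧ p ∈
      ({p | A p (Nat.pair k (2 * n + sbit w k)) ≠ 0} ∩
       {p | ∀ n' < w.length, A p (Nat.pair k (2 * n' + (1 - sbit w k))) = 0})} :=
    fun k n => isClopen_and_const ((hne _).inter (isClopen_ball (fun n' => hval _ 0)))
  have heq : {p | ok1 A p w} = {p | ∃ k < w.length, ∃ n < w.length, 2 * k < w.length ∧ p ∈
      ({p | A p (Nat.pair k (2 * n + sbit w k)) ≠ 0} ∩
       {p | ∀ n' < w.length, A p (Nat.pair k (2 * n' + (1 - sbit w k))) = 0})}ᶜ := by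
    ext p
    simp only [Set.mem_compl_iff, Set.mem_setOf_eq, Set.mem_inter_iff, ok1]
    constructor
    · intro h hcon
      obtain ⟨k, _, n, hn, h2k, hv, hg⟩ := hcon
      exact h ⟨k, n, h2k, hn, hv, hg⟩
    · intro h hcon
      obtain ⟨k, n, h2k, hn, hv, hg⟩ := hcon
      exact h ⟨k, by omega, n, hn, h2k, hv, hg⟩
  rw [heq]
  exact (isClopen_bex (fun k => isClopen_bex (fun n => key k n))).compl

theorem isClopen_ok2 (hW2 : ∀ t, Continuous fun x : Baire × Baire => W x.1 x.2 t)
    (w : List Bool) : IsClopen {p | ok2 W p w} := by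
  have key : ∀ j m, IsClopen {p | 2 * j + 1 < w.length ∧ p ∈
      ({p | FB W p w (Nat.pair j (2 * m + ubit w j))} ∩
       {p | ∀ m' < w.length, ¬ FB W p w (Nat.pair j (2 * m' + (1 - ubit w j)))})} :=
    fun j m => isClopen_and_const ((isClopen_FB hW2 w _).inter
      (isClopen_ball (fun m' => (isClopen_FB hW2 w _).compl)))
  have heq : {p | ok2 W p w} = {p | ∃ j < w.length, ∃ m < w.length, 2 * j + 1 < w.length ∧ p ∈
      ({p | FB W p w (Nat.pair j (2 * m + ubit w j))} ∩
       {p | ∀ m' < w.length, ¬ FB W p w (Nat.pair j (2 * m' + (1 - ubit w j)))})} ᶜ := by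
    ext p
    simp only [Set.mem_compl_iff, Set.mem_setOf_eq, Set.mem_inter_iff, ok2]
    constructor
    · intro h hcon
      obtain ⟨j, _, m, hm, h2j, hv, hg⟩ := hcon
      exact h ⟨j, m, h2j, hm, hv, hg⟩
    · intro h hcon
      obtain ⟨j, m, h2j, hm, hv, hg⟩ := hcon
      exact h ⟨j, by omega, m, hm, h2j, hv, hg⟩
  rw [heq]
  exact (isClopen_bex (fun j => isClopen_bex (fun m => key j m))).compl

theorem isClopen_memT (hA : Continuous A)
    (hW2 : ∀ t, Continuous fun x : Baire × Baire => W x.1 x.2 t)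
    (w : List Bool) : IsClopen {p | memT A W p w} := by
  have heq : {p | memT A W p w} = {p | ∀ n < w.length + 1,
      p ∈ ({p | ok1 A p (w.take n)} ∩ {p | ok2 W p (w.take n)})} := by
    ext p
    simp only [Set.mem_setOf_eq, Set.mem_inter_iff, memT]
    constructor
    · intro h n hn
      exact h n (by omega)
    · intro h n hn
      exact h n (by omega)
  rw [heq]
  exact isClopen_ball (fun n => (isClopen_ok1 hA _).inter (isClopen_ok2 hW2 _))

theorem isClopen_alive (hA : Continuous A)
    (hW2 : ∀ t, Continuous fun x : Baire × Baire => W x.1 x.2 t) :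
    ∀ (m : ℕ) (w : List Bool), IsClopen {p | alive A W p m w} := by
  intro m
  induction m with
  | zero => exact fun w => isClopen_memT hA hW2 w
  | succ m ih =>
    intro w
    have heq : {p | alive A W p (m + 1) w} =
        {p | alive A W p m (w ++ [false])} ∪ {p | alive A W p m (w ++ [true])} := rfl
    rw [heq]
    exact (ih _).union (ih _)

theorem ilc_eD (hA : Continuous A)
    (hW2 : ∀ t, Continuous fun x : Baire × Baire => W x.1 x.2 t)
    (w : List Bool) (b : Bool) (m : ℕ) :
    IsLocallyConstant (fun p => eD A W p w b m) := by
  rw [IsLocallyConstant.iff_exists_open]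
  intro p
  by_cases h1 : alive A W p m (w ++ [b])
  · refine ⟨{q | alive A W q m (w ++ [b])}, (isClopen_alive hA hW2 m _).isOpen, h1, ?_⟩
    intro q hq
    simp only [Set.mem_setOf_eq] at hq
    simp only [eD]
    rw [if_pos hq, if_pos h1]
  · by_cases h2 : alive A W p m (w ++ [!b])
    · refine ⟨{q | alive A W q m (w ++ [b])}ᶜ ∩ {q | alive A W q m (w ++ [!b])},
        ((isClopen_alive hA hW2 m _).compl.isOpen).inter (isClopen_alive hA hW2 m _).isOpen,
        ⟨h1, h2⟩, ?_⟩
      rintro q ⟨hq1, hq2⟩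
      simp only [Set.mem_compl_iff, Set.mem_setOf_eq] at hq1 hq2
      simp only [eD]
      rw [if_neg hq1, if_pos hq2, if_neg h1, if_pos h2]
    · refine ⟨{q | alive A W q m (w ++ [b])}ᶜ ∩ {q | alive A W q m (w ++ [!b])}ᶜ,
        ((isClopen_alive hA hW2 m _).compl.isOpen).inter (isClopen_alive hA hW2 m _).compl.isOpen,
        ⟨h1, h2⟩, ?_⟩
      rintro q ⟨hq1, hq2⟩
      simp only [Set.mem_compl_iff, Set.mem_setOf_eq] at hq1 hq2
      simp only [eD]
      rw [if_neg hq1, if_neg hq2, if_neg h1, if_neg h2]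

theorem continuous_Kc (hA : Continuous A)
    (hW2 : ∀ t, Continuous fun x : Baire × Baire => W x.1 x.2 t) :
    Continuous (Kc A W) := by
  apply continuous_pi
  intro n
  rcases hdec : (Encodable.decode n.unpair.1 : Option (List Bool)) with _ | w
  · have : (fun p => Kc A W p n) = fun _ => 0 := by
      funext p; simp [Kc, hdec]
    rw [this]; exact continuous_const
  · by_cases hpar : n.unpair.2 % 2 = 0
    · have : (fun p => Kc A W p n) = fun p => eD A W p w false (n.unpair.2 / 2) := by
        funext p; simp [Kc, hdec, hpar]
      rw [this]
      exact (ilc_eD hA hW2 w false _).continuous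
    · have : (fun p => Kc A W p n) = fun p => eD A W p w true (n.unpair.2 / 2) := by
        funext p; simp [Kc, hdec, hpar]
      rw [this]
      exact (ilc_eD hA hW2 w true _).continuous

theorem X_agree {c c' : Baire} : ∀ (n : ℕ),
    (∀ w : List Bool, w.length < n → c' (Encodable.encode w) = c (Encodable.encode w)) →
    X c' n = X c n := by
  intro n
  induction n with
  | zero => intro _; rfl
  | succ n ih =>
    intro h
    have hXn : X c' n = X c n := ih (fun w hw => h w (by omega))
    show X c' n ++ _ = X c n ++ _
    rw [hXn, h (X c n) (by rw [length_X]; omega)]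

theorem ilc_xb (i : ℕ) : IsLocallyConstant (fun c => xb c i) := by
  rw [IsLocallyConstant.iff_exists_open]
  intro c
  refine ⟨⋂ w ∈ {w : List Bool | w.length ≤ i},
      (fun c' : Baire => c' (Encodable.encode w)) ⁻¹' {c (Encodable.encode w)}, ?_, ?_, ?_⟩
  · exact (List.finite_length_le Bool i).isOpen_biInter
      (fun w _ => (isOpen_discrete ({c (Encodable.encode w)} : Set ℕ)).preimage
        (continuous_apply (Encodable.encode w)))
  · simp only [Set.mem_iInter, Set.mem_preimage, Set.mem_singleton_iff]
    intro w _
    trivial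
  · intro c' hc'
    simp only [Set.mem_iInter, Set.mem_preimage, Set.mem_singleton_iff,
      Set.mem_setOf_eq] at hc'
    have hX : X c' i = X c i := X_agree i (fun w hw => hc' w (by omega))
    simp only [xb, hX]
    rw [hc' (X c i) (le_of_eq (length_X c i))]

theorem continuous_a1 : Continuous a1 :=
  continuous_pi fun k => ((ilc_xb (2 * k)).comp Bool.toNat).continuous

theorem continuous_a2 : Continuous a2 :=
  continuous_pi fun j => ((ilc_xb (2 * j + 1)).comp Bool.toNat).continuous

end Clopen
end WC
/-- Weakly continuous multi-valued functions are closed under composition. -/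
theorem weakly_continuous_closed_under_composition (f g : MV)
    (hf : WRed f parLLPO) (hg : WRed g parLLPO) : WRed (mComp g f) parLLPO := by
  classical
  obtain ⟨H₁, K₁, hH₁, hK₁, hR₁⟩ := hf
  obtain ⟨H₂, K₂, hH₂, hK₂, hR₂⟩ := hg
  set A : Baire → Baire := K₁ with hAdef
  set W : Baire → Baire → ℕ → ℕ := fun p a t => K₂ (H₁ (bpair p a)) t with hWdef
  have hW2 : ∀ t, Continuous fun x : Baire × Baire => W x.1 x.2 t := by
    intro t
    exact (continuous_apply t).comp (hK₂.comp (hH₁.comp WC.cont_bpair2))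
  have hWa : ∀ (p : Baire) (t : ℕ), Continuous fun a => W p a t := by
    intro p t
    exact (hW2 t).comp (continuous_const.prodMk continuous_id)
  refine ⟨fun r => H₂ (bpair (H₁ (bpair (proj1 r) (WC.a1 (proj2 r)))) (WC.a2 (proj2 r))),
    WC.Kc A W, ?_, WC.continuous_Kc hK₁ hW2, ?_⟩
  · exact hH₂.comp (WC.cont_bpair2.comp
      ((hH₁.comp (WC.cont_bpair2.comp
        (WC.cont_proj1.prodMk (WC.continuous_a1.comp WC.cont_proj2)))).prodMk
        (WC.continuous_a2.comp WC.cont_proj2)))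
  · intro G hG p hp
    set c : Baire := G (WC.Kc A W p) with hcdef
    have hc : c ∈ parLLPO (WC.Kc A W p) := hG _ WC.Kc_dom
    obtain ⟨z₀, hf1, hf2, _⟩ := hp
    show H₂ (bpair (H₁ (bpair (proj1 (bpair p c)) (WC.a1 (proj2 (bpair p c)))))
        (WC.a2 (proj2 (bpair p c)))) ∈ mComp g f p
    rw [WC.proj1_bpair, WC.proj2_bpair]
    have hy : H₁ (bpair p (WC.a1 c)) ∈ f p := by
      refine WC.lemA f H₁ K₁ hR₁ p (WC.a1 c) hf1 ?_
      by_cases hne : (parLLPO (K₁ p)).Nonempty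
      · exact Or.inl (WC.valid1 hc hne)
      · exact Or.inr hne
    have hgy : (g (H₁ (bpair p (WC.a1 c)))).Nonempty := hf2 _ hy
    have hz : H₂ (bpair (H₁ (bpair p (WC.a1 c))) (WC.a2 c)) ∈ g (H₁ (bpair p (WC.a1 c))) := by
      refine WC.lemA g H₂ K₂ hR₂ (H₁ (bpair p (WC.a1 c))) (WC.a2 c) hgy ?_
      by_cases hne2 : (parLLPO (K₂ (H₁ (bpair p (WC.a1 c))))).Nonempty
      · exact Or.inl (WC.valid2 (hWa p) hc hne2)
      · exact Or.inr hne2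
    exact ⟨hf1, hf2, H₁ (bpair p (WC.a1 c)), hy, hz⟩
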